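/- Let H be a separable real Hilbert space with orthonormal basis {e_i}_{i≥1}, let d be a positive integer, and let X := (X_k, k ∈ Z^d) be a strictly stationary ρ'-mixing random field of H-valued random variables with E X_0 = 0_H and E‖X_0‖^2_H < ∞. Let j be a positive integer with ρ'(X,j) < 1 and set C := j^d (1+ρ'(X,j))^d/(1−ρ'(X,j))^d. Then the coordinate variance limits σ_{ii} := lim_{min{L_u} → ∞} E⟨S(X,L),e_i⟩^2/(L_1·...·L_d) satisfy σ_{ii} ≤ C · E⟨X_0,e_i⟩^2 for every i ≥ 1, and consequently Σ_{i=1}^∞ σ_{ii} ≤ C · E‖X_0‖^2_H < ∞ (the covariance operator has finite trace). -/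

import Mathlib

set_option linter.unusedSectionVars false
set_option maxHeartbeats 1000000


open MeasureTheory ProbabilityTheory Filter

noncomputable section

/-- Rectangular partial sum `S(X, L) = ∑_{1 ≤ k_u ≤ L_u} X_k`. -/
def boxSum {Ω : Type*} {d : ℕ} {E : Type*} [AddCommMonoid E]
    (X : (Fin d → ℤ) → Ω → E) (L : Fin d → ℕ) (ω : Ω) : E :=
  ∑ k ∈ Finset.Icc (fun _ => 1) L, X (fun u => (k u : ℤ)) ω

/-- Strict stationarity of a random field. -/
def StrictlyStationary {Ω : Type*} [MeasurableSpace Ω] (P : Measure Ω) {d : ℕ}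
    {E : Type*} [MeasurableSpace E] (X : (Fin d → ℤ) → Ω → E) : Prop :=
  ∀ j : Fin d → ℤ,
    Measure.map (fun ω (k : Fin d → ℤ) => X (k + j) ω) P =
      Measure.map (fun ω (k : Fin d → ℤ) => X k ω) P

/-- Maximal correlation coefficient `ρ(𝒜, ℬ)` between two sub-σ-fields. -/
def maxCorr {Ω : Type*} [MeasurableSpace Ω] (P : Measure Ω)
    (A B : MeasurableSpace Ω) : ℝ :=
  sSup { r : ℝ | ∃ f g : Ω → ℝ, Measurable[A] f ∧ Measurable[B] g ∧
    MemLp f 2 P ∧ MemLp g 2 P ∧ variance f P ≠ 0 ∧ variance g P ≠ 0 ∧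
    r = |(∫ ω, f ω * g ω ∂P) - (∫ ω, f ω ∂P) * (∫ ω, g ω ∂P)| /
        (Real.sqrt (variance f P) * Real.sqrt (variance g P)) }

/-- The σ-field generated by the random variables `X_k`, `k ∈ Q`. -/
def fieldSigma {Ω : Type*} {d : ℕ} {E : Type*} [MeasurableSpace E]
    (X : (Fin d → ℤ) → Ω → E) (Q : Set (Fin d → ℤ)) : MeasurableSpace Ω :=
  ⨆ k ∈ Q, MeasurableSpace.comap (X k) inferInstance

/-- `Q` and `S` are separated: lie in coordinate slabs at distance `≥ n`. -/
def SeparatedPair {d : ℕ} (n : ℕ) (Q S : Finset (Fin d → ℤ)) : Prop :=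
  ∃ u : Fin d, ∃ A B : Set ℤ, A.Nonempty ∧ B.Nonempty ∧ Disjoint A B ∧
    (∀ a ∈ A, ∀ b ∈ B, (n : ℤ) ≤ |a - b|) ∧
    (∀ k ∈ Q, k u ∈ A) ∧ (∀ k ∈ S, k u ∈ B)

/-- The interlaced mixing coefficient `ρ'(X, n)`. -/
def rhoPrime {Ω : Type*} [MeasurableSpace Ω] (P : Measure Ω) {d : ℕ}
    {E : Type*} [MeasurableSpace E] (X : (Fin d → ℤ) → Ω → E) (n : ℕ) : ℝ :=
  sSup { r : ℝ | ∃ Q S : Finset (Fin d → ℤ), Q.Nonempty ∧ S.Nonempty ∧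
    Disjoint Q S ∧ SeparatedPair n Q S ∧
    r = maxCorr P (fieldSigma X (Q : Set (Fin d → ℤ)))
          (fieldSigma X (S : Set (Fin d → ℤ))) }

/-- `ρ'`-mixing: `ρ'(X, n) → 0` as `n → ∞`. -/
def RhoPrimeMixing {Ω : Type*} [MeasurableSpace Ω] (P : Measure Ω) {d : ℕ}
    {E : Type*} [MeasurableSpace E] (X : (Fin d → ℤ) → Ω → E) : Prop :=
  Tendsto (rhoPrime P X) atTop (nhds 0)


open scoped RealInnerProductSpace


namespace CovTraceAux

variable {Ω : Type*} [MeasurableSpace Ω] {P : Measure Ω} [IsProbabilityMeasure P]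

lemma coeFn_sum_toLp {ι : Type*} (s : Finset ι) (f : ι → Ω → ℝ)
    (hf : ∀ c, MemLp (f c) 2 P) :
    ⇑(∑ c ∈ s, (hf c).toLp (f c)) =ᵐ[P] fun ω => ∑ c ∈ s, f c ω := by
  classical
  induction s using Finset.induction_on with
  | empty => simp only [Finset.sum_empty]; exact MeasureTheory.Lp.coeFn_zero ℝ 2 P
  | insert a s' h ih =>
    rw [Finset.sum_insert h]
    refine (MeasureTheory.Lp.coeFn_add _ _).trans ?_
    filter_upwards [(hf a).coeFn_toLp, ih] with ω h1 h2
    rw [Pi.add_apply, h1, h2, Finset.sum_insert h]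

lemma inner_sum_toLp {ι : Type*} (s t : Finset ι) (f : ι → Ω → ℝ)
    (hf : ∀ c, MemLp (f c) 2 P) :
    ⟪(∑ c ∈ s, (hf c).toLp (f c)), (∑ c ∈ t, (hf c).toLp (f c))⟫
      = ∫ ω, (∑ c ∈ s, f c ω) * (∑ c ∈ t, f c ω) ∂P := by
  rw [MeasureTheory.L2.inner_def]
  refine integral_congr_ae ?_
  filter_upwards [coeFn_sum_toLp s f hf, coeFn_sum_toLp t f hf] with ω h1 h2
  simp only [RCLike.inner_apply, starRingEnd_apply, star_trivial]
  rw [h1, h2, mul_comm]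

lemma norm_sq_sum_toLp {ι : Type*} (s : Finset ι) (f : ι → Ω → ℝ)
    (hf : ∀ c, MemLp (f c) 2 P) :
    ‖∑ c ∈ s, (hf c).toLp (f c)‖ ^ 2 = ∫ ω, (∑ c ∈ s, f c ω) ^ 2 ∂P := by
  rw [← real_inner_self_eq_norm_sq, inner_sum_toLp]
  simp [pow_two]

lemma inner_toLp (f g : Ω → ℝ) (hf : MemLp f 2 P) (hg : MemLp g 2 P) :
    ⟪hf.toLp f, hg.toLp g⟫ = ∫ ω, f ω * g ω ∂P := by
  rw [MeasureTheory.L2.inner_def]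
  refine integral_congr_ae ?_
  filter_upwards [hf.coeFn_toLp, hg.coeFn_toLp] with ω h1 h2
  simp only [RCLike.inner_apply, starRingEnd_apply, star_trivial]
  rw [h1, h2, mul_comm]

lemma norm_sq_toLp (f : Ω → ℝ) (hf : MemLp f 2 P) :
    ‖hf.toLp f‖ ^ 2 = ∫ ω, f ω ^ 2 ∂P := by
  rw [← real_inner_self_eq_norm_sq, inner_toLp]
  simp [pow_two]

lemma abs_integral_mul_le (f g : Ω → ℝ) (hf : MemLp f 2 P) (hg : MemLp g 2 P) :
    |∫ ω, f ω * g ω ∂P| ≤ Real.sqrt (∫ ω, f ω ^ 2 ∂P) * Real.sqrt (∫ ω, g ω ^ 2 ∂P) := by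
  have h := abs_real_inner_le_norm (hf.toLp f) (hg.toLp g)
  rw [inner_toLp] at h
  rw [← norm_sq_toLp f hf, ← norm_sq_toLp g hg, Real.sqrt_sq (norm_nonneg _),
    Real.sqrt_sq (norm_nonneg _)]
  exact h

lemma integrable_mul' (f g : Ω → ℝ) (hf : MemLp f 2 P) (hg : MemLp g 2 P) :
    Integrable (fun ω => f ω * g ω) P := by
  have h := MeasureTheory.L2.integrable_inner (𝕜 := ℝ) (hf.toLp f) (hg.toLp g)
  refine h.congr ?_
  filter_upwards [hf.coeFn_toLp, hg.coeFn_toLp] with ω h1 h2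
  simp only [RCLike.inner_apply, starRingEnd_apply, star_trivial]
  rw [h1, h2, mul_comm]

lemma variance_of_integral_zero (f : Ω → ℝ) (hf : MemLp f 2 P)
    (h0 : ∫ ω, f ω ∂P = 0) : variance f P = ∫ ω, f ω ^ 2 ∂P := by
  rw [variance_eq_sub hf]
  simp only [Pi.pow_apply]
  rw [h0]
  simp

lemma abs_cov_le (f g : Ω → ℝ) (hf : MemLp f 2 P) (hg : MemLp g 2 P) :
    |(∫ ω, f ω * g ω ∂P) - (∫ ω, f ω ∂P) * (∫ ω, g ω ∂P)|
      ≤ Real.sqrt (variance f P) * Real.sqrt (variance g P) := by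
  set a := ∫ ω, f ω ∂P with ha
  set b := ∫ ω, g ω ∂P with hb
  have hf' : MemLp (fun ω => f ω - a) 2 P := hf.sub (memLp_const a)
  have hg' : MemLp (fun ω => g ω - b) 2 P := hg.sub (memLp_const b)
  have hfi : Integrable f P := hf.integrable one_le_two
  have hgi : Integrable g P := hg.integrable one_le_two
  have hfg : Integrable (fun ω => f ω * g ω) P := integrable_mul' f g hf hg
  have key : ∫ ω, (f ω - a) * (g ω - b) ∂P = (∫ ω, f ω * g ω ∂P) - a * b := by
    have h2 : (fun ω => (f ω - a) * (g ω - b))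
        = fun ω => f ω * g ω - a * g ω - b * f ω + a * b := by
      funext ω; ring
    have i2 : Integrable (fun ω => f ω * g ω - a * g ω) P := hfg.sub (hgi.const_mul a)
    have i1 : Integrable (fun ω => f ω * g ω - a * g ω - b * f ω) P :=
      i2.sub (hfi.const_mul b)
    rw [h2, integral_add i1 (integrable_const (a*b)),
      integral_sub i2 (hfi.const_mul b),
      integral_sub hfg (hgi.const_mul a),
      integral_const_mul _ _, integral_const_mul _ _, integral_const]
    simp only [measure_univ, probReal_univ, ENNReal.toReal_one, smul_eq_mul, one_mul, ← ha, ← hb]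
    ring
  have hvf : variance f P = ∫ ω, (f ω - a) ^ 2 ∂P := by
    rw [variance_eq_sub hf]
    have h2 : (fun ω => (f ω - a) ^ 2) = fun ω => f ω ^ 2 - 2 * a * f ω + a ^ 2 := by
      funext ω; ring
    have i1 : Integrable (fun ω => f ω ^ 2 - 2 * a * f ω) P :=
      hf.integrable_sq.sub (hfi.const_mul (2*a))
    rw [h2, integral_add i1 (integrable_const _),
      integral_sub hf.integrable_sq (hfi.const_mul (2*a)), integral_const_mul _ _, integral_const]
    simp only [measure_univ, probReal_univ, ENNReal.toReal_one, smul_eq_mul, one_mul, Pi.pow_apply, ← ha]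
    ring
  have hvg : variance g P = ∫ ω, (g ω - b) ^ 2 ∂P := by
    rw [variance_eq_sub hg]
    have h2 : (fun ω => (g ω - b) ^ 2) = fun ω => g ω ^ 2 - 2 * b * g ω + b ^ 2 := by
      funext ω; ring
    have i1 : Integrable (fun ω => g ω ^ 2 - 2 * b * g ω) P :=
      hg.integrable_sq.sub (hgi.const_mul (2*b))
    rw [h2, integral_add i1 (integrable_const _),
      integral_sub hg.integrable_sq (hgi.const_mul (2*b)), integral_const_mul _ _, integral_const]
    simp only [measure_univ, probReal_univ, ENNReal.toReal_one, smul_eq_mul, one_mul, Pi.pow_apply, ← hb]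
    ring
  rw [← key, hvf, hvg]
  exact abs_integral_mul_le _ _ hf' hg'

end CovTraceAux

namespace CovTraceAux

variable {Ω : Type*} [MeasurableSpace Ω] {P : Measure Ω} [IsProbabilityMeasure P]

lemma variance_eq_integral_sub_sq (f : Ω → ℝ) (hf : MemLp f 2 P) :
    variance f P = ∫ ω, (f ω - ∫ x, f x ∂P) ^ 2 ∂P := by
  set a := ∫ x, f x ∂P with ha
  have hfi : Integrable f P := hf.integrable one_le_two
  rw [variance_eq_sub hf]
  have h2 : (fun ω => (f ω - a) ^ 2) = fun ω => f ω ^ 2 - 2 * a * f ω + a ^ 2 := by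
    funext ω; ring
  have i1 : Integrable (fun ω => f ω ^ 2 - 2 * a * f ω) P :=
    hf.integrable_sq.sub (hfi.const_mul (2*a))
  rw [h2, integral_add i1 (integrable_const _),
    integral_sub hf.integrable_sq (hfi.const_mul (2*a)), integral_const_mul _ _, integral_const]
  simp only [measure_univ, probReal_univ, ENNReal.toReal_one, smul_eq_mul, one_mul, Pi.pow_apply, ← ha]
  ring

lemma aux_ratio_nonneg (f g : Ω → ℝ) :
    0 ≤ |(∫ ω, f ω * g ω ∂P) - (∫ ω, f ω ∂P) * (∫ ω, g ω ∂P)| /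
        (Real.sqrt (variance f P) * Real.sqrt (variance g P)) := by
  positivity

lemma aux_ratio_le_one (f g : Ω → ℝ) (hf2 : MemLp f 2 P) (hg2 : MemLp g 2 P) :
    |(∫ ω, f ω * g ω ∂P) - (∫ ω, f ω ∂P) * (∫ ω, g ω ∂P)| /
        (Real.sqrt (variance f P) * Real.sqrt (variance g P)) ≤ 1 := by
  by_cases hden : Real.sqrt (variance f P) * Real.sqrt (variance g P) = 0
  · rw [hden, div_zero]; exact zero_le_one
  · have hpos : 0 < Real.sqrt (variance f P) * Real.sqrt (variance g P) :=
      lt_of_le_of_ne (by positivity) (Ne.symm hden)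
    rw [div_le_one hpos]
    exact abs_cov_le f g hf2 hg2

end CovTraceAux

namespace CovTraceAux

lemma maxCorr_nonneg' {Ω : Type*} {mΩ : MeasurableSpace Ω} {P : Measure Ω}
    [IsProbabilityMeasure P] {mA mB : MeasurableSpace Ω} : 0 ≤ @maxCorr Ω mΩ P mA mB := by
  refine Real.sSup_nonneg fun r hr => ?_
  obtain ⟨f, g, -, -, -, -, -, -, rfl⟩ := hr
  exact @aux_ratio_nonneg Ω mΩ P _ f g

lemma maxCorr_le_one' {Ω : Type*} {mΩ : MeasurableSpace Ω} {P : Measure Ω}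
    [IsProbabilityMeasure P] {mA mB : MeasurableSpace Ω} : @maxCorr Ω mΩ P mA mB ≤ 1 := by
  refine Real.sSup_le (fun r hr => ?_) zero_le_one
  obtain ⟨f, g, -, -, hf2, hg2, -, -, rfl⟩ := hr
  exact @aux_ratio_le_one Ω mΩ P _ f g hf2 hg2

end CovTraceAux

namespace CovTraceAux

variable {Ω : Type*} [MeasurableSpace Ω] {P : Measure Ω} [IsProbabilityMeasure P]

variable {d : ℕ} {H : Type*} [MeasurableSpace H]

lemma rhoPrime_nonneg (X : (Fin d → ℤ) → Ω → H) (n : ℕ) : 0 ≤ rhoPrime P X n := by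
  refine Real.sSup_nonneg (fun r hr => ?_)
  obtain ⟨Q, S, _, _, _, _, rfl⟩ := hr
  exact maxCorr_nonneg' (P := P)

lemma cov_le_rhoPrime (X : (Fin d → ℤ) → Ω → H) (n : ℕ)
    (Q S : Finset (Fin d → ℤ)) (hQ : Q.Nonempty) (hS : S.Nonempty)
    (hdisj : Disjoint Q S) (hsep : SeparatedPair n Q S) (f g : Ω → ℝ)
    (hfm : Measurable[fieldSigma X ↑Q] f) (hgm : Measurable[fieldSigma X ↑S] g)
    (hf2 : MemLp f 2 P) (hg2 : MemLp g 2 P) :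
    |(∫ ω, f ω * g ω ∂P) - (∫ ω, f ω ∂P) * (∫ ω, g ω ∂P)|
      ≤ rhoPrime P X n * (Real.sqrt (variance f P) * Real.sqrt (variance g P)) := by
  have hRHS0 : ∀ h : True, 0 ≤ rhoPrime P X n *
      (Real.sqrt (variance f P) * Real.sqrt (variance g P)) := fun _ =>
    mul_nonneg (rhoPrime_nonneg X n)
      (mul_nonneg (Real.sqrt_nonneg _) (Real.sqrt_nonneg _))
  by_cases hvf : variance f P = 0
  · have hi : Integrable (fun ω => (f ω - ∫ x, f x ∂P) ^ 2) P :=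
      (hf2.sub (memLp_const _)).integrable_sq
    have h0 : (fun ω => (f ω - ∫ x, f x ∂P) ^ 2) =ᵐ[P] 0 :=
      (integral_eq_zero_iff_of_nonneg (fun ω => sq_nonneg _) hi).mp
        (by rw [← variance_eq_integral_sub_sq f hf2]; exact hvf)
    have hfa : f =ᵐ[P] fun _ => ∫ x, f x ∂P := by
      filter_upwards [h0] with ω hω
      have : (f ω - ∫ x, f x ∂P) ^ 2 = 0 := hω
      have h2 := sub_eq_zero.mp ((pow_eq_zero_iff two_ne_zero).mp this)
      linarith
    have : ∫ ω, f ω * g ω ∂P = (∫ x, f x ∂P) * ∫ ω, g ω ∂P := by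
      rw [← integral_const_mul _ _]
      refine integral_congr_ae ?_
      filter_upwards [hfa] with ω hω
      rw [hω]
    rw [this, sub_self, abs_zero]
    exact hRHS0 trivial
  by_cases hvg : variance g P = 0
  · have hi : Integrable (fun ω => (g ω - ∫ x, g x ∂P) ^ 2) P :=
      (hg2.sub (memLp_const _)).integrable_sq
    have h0 : (fun ω => (g ω - ∫ x, g x ∂P) ^ 2) =ᵐ[P] 0 :=
      (integral_eq_zero_iff_of_nonneg (fun ω => sq_nonneg _) hi).mp
        (by rw [← variance_eq_integral_sub_sq g hg2]; exact hvg)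
    have hga : g =ᵐ[P] fun _ => ∫ x, g x ∂P := by
      filter_upwards [h0] with ω hω
      have : (g ω - ∫ x, g x ∂P) ^ 2 = 0 := hω
      have h2 := sub_eq_zero.mp ((pow_eq_zero_iff two_ne_zero).mp this)
      linarith
    have : ∫ ω, f ω * g ω ∂P = (∫ x, f x ∂P) * ∫ ω, g ω ∂P := by
      have h1 : ∫ ω, f ω * g ω ∂P = ∫ ω, (∫ x, g x ∂P) * f ω ∂P := by
        refine integral_congr_ae ?_
        filter_upwards [hga] with ω hω
        rw [hω]; ring
      rw [h1, integral_const_mul _ _]; ring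
    rw [this, sub_self, abs_zero]
    exact hRHS0 trivial
  · have hden : 0 < Real.sqrt (variance f P) * Real.sqrt (variance g P) :=
      mul_pos (Real.sqrt_pos.mpr (lt_of_le_of_ne (variance_nonneg _ _) (Ne.symm hvf)))
        (Real.sqrt_pos.mpr (lt_of_le_of_ne (variance_nonneg _ _) (Ne.symm hvg)))
    set r := |(∫ ω, f ω * g ω ∂P) - (∫ ω, f ω ∂P) * (∫ ω, g ω ∂P)| /
        (Real.sqrt (variance f P) * Real.sqrt (variance g P)) with hrdef
    have hbdd : BddAbove { r : ℝ | ∃ f g : Ω → ℝ, Measurable[fieldSigma X ↑Q] f ∧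
        Measurable[fieldSigma X ↑S] g ∧
        MemLp f 2 P ∧ MemLp g 2 P ∧ variance f P ≠ 0 ∧ variance g P ≠ 0 ∧
        r = |(∫ ω, f ω * g ω ∂P) - (∫ ω, f ω ∂P) * (∫ ω, g ω ∂P)| /
            (Real.sqrt (variance f P) * Real.sqrt (variance g P)) } := by
      refine ⟨1, fun x hx => ?_⟩
      obtain ⟨f', g', -, -, hf2', hg2', -, -, rfl⟩ := hx
      exact aux_ratio_le_one f' g' hf2' hg2'
    have hmem : r ∈ { r : ℝ | ∃ f g : Ω → ℝ, Measurable[fieldSigma X ↑Q] f ∧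
        Measurable[fieldSigma X ↑S] g ∧
        MemLp f 2 P ∧ MemLp g 2 P ∧ variance f P ≠ 0 ∧ variance g P ≠ 0 ∧
        r = |(∫ ω, f ω * g ω ∂P) - (∫ ω, f ω ∂P) * (∫ ω, g ω ∂P)| /
            (Real.sqrt (variance f P) * Real.sqrt (variance g P)) } :=
      ⟨f, g, hfm, hgm, hf2, hg2, hvf, hvg, hrdef⟩
    have h1 : r ≤ maxCorr P (fieldSigma X ↑Q) (fieldSigma X ↑S) := le_csSup hbdd hmem
    have hbdd2 : BddAbove { r : ℝ | ∃ Q' S' : Finset (Fin d → ℤ), Q'.Nonempty ∧ S'.Nonempty ∧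
        Disjoint Q' S' ∧ SeparatedPair n Q' S' ∧
        r = maxCorr P (fieldSigma X (Q' : Set (Fin d → ℤ)))
              (fieldSigma X (S' : Set (Fin d → ℤ))) } := by
      refine ⟨1, fun x hx => ?_⟩
      obtain ⟨Q', S', -, -, -, -, rfl⟩ := hx
      exact maxCorr_le_one' (P := P)
    have hmem2 : maxCorr P (fieldSigma X (Q : Set (Fin d → ℤ)))
          (fieldSigma X (S : Set (Fin d → ℤ)))
        ∈ { r : ℝ | ∃ Q' S' : Finset (Fin d → ℤ), Q'.Nonempty ∧ S'.Nonempty ∧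
        Disjoint Q' S' ∧ SeparatedPair n Q' S' ∧
        r = maxCorr P (fieldSigma X (Q' : Set (Fin d → ℤ)))
              (fieldSigma X (S' : Set (Fin d → ℤ))) } :=
      ⟨Q, S, hQ, hS, hdisj, hsep, rfl⟩
    have h2 : maxCorr P (fieldSigma X ↑Q) (fieldSigma X ↑S) ≤ rhoPrime P X n :=
      le_csSup hbdd2 hmem2
    have h3 : |(∫ ω, f ω * g ω ∂P) - (∫ ω, f ω ∂P) * (∫ ω, g ω ∂P)| = r *
        (Real.sqrt (variance f P) * Real.sqrt (variance g P)) := by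
      rw [hrdef, div_mul_cancel₀ _ hden.ne']
    rw [h3]
    exact mul_le_mul_of_nonneg_right (h1.trans h2) hden.le

section Core

variable {E : Type*} [NormedAddCommGroup E] [InnerProductSpace ℝ E]
  {ι : Type*} [DecidableEq ι]

lemma core_sum_sq_aux (z : ι → E) (T : Finset ι) :
    ∑ A ∈ T.powerset, ‖∑ k ∈ T, (if k ∈ A then (1:ℝ) else -1) • z k‖ ^ 2
      = 2 ^ T.card * ∑ k ∈ T, ‖z k‖ ^ 2 := by
  induction T using Finset.induction_on with
  | empty => simp
  | @insert a T ha ih =>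
    have hdisj : Disjoint T.powerset (T.powerset.image (insert a)) := by
      rw [Finset.disjoint_left]
      intro A hA hA'
      obtain ⟨B, hB, rfl⟩ := Finset.mem_image.mp hA'
      exact ha (Finset.mem_powerset.mp hA (Finset.mem_insert_self a B))
    have hinj : ∀ x ∈ T.powerset, ∀ y ∈ T.powerset, insert a x = insert a y → x = y := by
      intro x hx y hy hxy
      have hax : a ∉ x := fun h => ha (Finset.mem_powerset.mp hx h)
      have hay : a ∉ y := fun h => ha (Finset.mem_powerset.mp hy h)
      ext b
      by_cases hb : b = a
      · subst hb; simp [hax, hay]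
      · have := Finset.ext_iff.mp hxy b
        simpa [Finset.mem_insert, hb] using this
    have hw1 : ∀ A ∈ T.powerset,
        (∑ k ∈ insert a T, (if k ∈ A then (1:ℝ) else -1) • z k)
          = (∑ k ∈ T, (if k ∈ A then (1:ℝ) else -1) • z k) - z a := by
      intro A hA
      have haA : a ∉ A := fun h => ha (Finset.mem_powerset.mp hA h)
      rw [Finset.sum_insert ha, if_neg haA, neg_one_smul]
      abel
    have hw2 : ∀ A ∈ T.powerset,
        (∑ k ∈ insert a T, (if k ∈ insert a A then (1:ℝ) else -1) • z k)
          = z a + ∑ k ∈ T, (if k ∈ A then (1:ℝ) else -1) • z k := by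
      intro A hA
      rw [Finset.sum_insert ha, if_pos (Finset.mem_insert_self a A), one_smul]
      congr 1
      refine Finset.sum_congr rfl (fun k hk => ?_)
      have hka : k ≠ a := fun h => ha (h ▸ hk)
      simp [Finset.mem_insert, hka]
    rw [Finset.powerset_insert, Finset.sum_union hdisj, Finset.sum_image hinj]
    have : (∑ A ∈ T.powerset, ‖∑ k ∈ insert a T, (if k ∈ A then (1:ℝ) else -1) • z k‖ ^ 2)
        + ∑ A ∈ T.powerset, ‖∑ k ∈ insert a T, (if k ∈ insert a A then (1:ℝ) else -1) • z k‖ ^ 2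
        = ∑ A ∈ T.powerset,
          (2 * ‖∑ k ∈ T, (if k ∈ A then (1:ℝ) else -1) • z k‖ ^ 2 + 2 * ‖z a‖ ^ 2) := by
      rw [← Finset.sum_add_distrib]
      refine Finset.sum_congr rfl (fun A hA => ?_)
      rw [hw1 A hA, hw2 A hA]
      set W := ∑ k ∈ T, (if k ∈ A then (1:ℝ) else -1) • z k
      have e1 := norm_sub_sq_real W (z a)
      have e2 := norm_add_sq_real (z a) W
      have e3 := real_inner_comm W (z a)
      nlinarith [e1, e2, e3]
    rw [this, Finset.sum_add_distrib, ← Finset.mul_sum, ih, Finset.sum_const,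
      Finset.card_powerset, Finset.card_insert_of_notMem ha, Finset.sum_insert ha]
    push_cast
    ring

lemma core_sum_sq (ρ : ℝ) (hρ0 : 0 ≤ ρ) (T : Finset ι) (z : ι → E)
    (h : ∀ A ⊆ T, |⟪(∑ k ∈ A, z k), (∑ k ∈ T \ A, z k)⟫| ≤
        ρ * (‖∑ k ∈ A, z k‖ * ‖∑ k ∈ T \ A, z k‖)) :
    (1 - ρ) * ‖∑ k ∈ T, z k‖ ^ 2 ≤ (1 + ρ) * ∑ k ∈ T, ‖z k‖ ^ 2 := by
  have key : ∀ A ∈ T.powerset, (1 - ρ) * ‖∑ k ∈ T, z k‖ ^ 2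
      ≤ (1 + ρ) * ‖∑ k ∈ T, (if k ∈ A then (1:ℝ) else -1) • z k‖ ^ 2 := by
    intro A hA
    have hA' := Finset.mem_powerset.mp hA
    set u := ∑ k ∈ A, z k with hu
    set v := ∑ k ∈ T \ A, z k with hv
    have huv : ∑ k ∈ T, z k = u + v := by
      rw [hu, hv, add_comm]
      exact (Finset.sum_sdiff hA').symm
    have hw : (∑ k ∈ T, (if k ∈ A then (1:ℝ) else -1) • z k) = u - v := by
      rw [← Finset.sum_sdiff hA']
      have e1 : ∑ k ∈ T \ A, (if k ∈ A then (1:ℝ) else -1) • z k = -v := by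
        rw [hv, ← Finset.sum_neg_distrib]
        refine Finset.sum_congr rfl (fun k hk => ?_)
        rw [if_neg (Finset.mem_sdiff.mp hk).2, neg_one_smul]
      have e2 : ∑ k ∈ A, (if k ∈ A then (1:ℝ) else -1) • z k = u := by
        rw [hu]
        refine Finset.sum_congr rfl (fun k hk => ?_)
        rw [if_pos hk, one_smul]
      rw [e1, e2]
      abel
    have h1 : ⟪u, v⟫ ≤ ρ * (‖u‖ * ‖v‖) := le_trans (le_abs_self _) (h A hA')
    rw [huv, hw, norm_add_sq_real, norm_sub_sq_real]
    nlinarith [h1, hρ0, sq_nonneg (‖u‖ - ‖v‖), mul_nonneg hρ0 (sq_nonneg (‖u‖ - ‖v‖))]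
  have hsum := Finset.sum_le_sum key
  rw [Finset.sum_const, Finset.card_powerset, ← Finset.mul_sum, core_sum_sq_aux z T,
    nsmul_eq_mul] at hsum
  push_cast at hsum
  have hpos : (0:ℝ) < 2 ^ T.card := by positivity
  have h2 : (2:ℝ) ^ T.card * ((1 - ρ) * ‖∑ k ∈ T, z k‖ ^ 2)
      ≤ (2:ℝ) ^ T.card * ((1 + ρ) * ∑ k ∈ T, ‖z k‖ ^ 2) := by
    ring_nf at hsum ⊢
    linarith
  exact le_of_mul_le_mul_left h2 hpos

end Core

end CovTraceAux

namespace CovTraceAux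

section Main

variable {Ω : Type*} [MeasurableSpace Ω] {P : Measure Ω} [IsProbabilityMeasure P]
variable {H : Type*} [NormedAddCommGroup H] [InnerProductSpace ℝ H] [CompleteSpace H]
  [MeasurableSpace H] [BorelSpace H]

lemma main_box_bound {d : ℕ} (X : (Fin d → ℤ) → Ω → H)
    (hmeas : ∀ k, Measurable (X k)) (hstat : StrictlyStationary P X)
    (hmoment : MemLp (X 0) 2 P) (hmean : ∫ ω, X 0 ω ∂P = 0)
    (v : H) (hv : ‖v‖ = 1) (j : ℕ) (hj : 0 < j) (hρ : rhoPrime P X j < 1)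
    (L : Fin d → ℕ) :
    ∫ ω, ⟪boxSum X L ω, v⟫ ^ 2 ∂P
      ≤ ((j:ℝ) * ((1 + rhoPrime P X j) / (1 - rhoPrime P X j))) ^ d
        * (∏ u, (L u : ℝ)) * ∫ ω, ⟪X 0 ω, v⟫ ^ 2 ∂P := by
  classical
  set ρ := rhoPrime P X j with hρdef
  have hρ0 : 0 ≤ ρ := rhoPrime_nonneg X j
  have h1ρ : 0 < 1 - ρ := by linarith
  set K : ℝ := (1 + ρ) / (1 - ρ) with hKdef
  have hK0 : 0 ≤ K := div_nonneg (by linarith) h1ρ.le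
  set Y : (Fin d → ℤ) → Ω → ℝ := fun k ω => ⟪X k ω, v⟫ with hYdef
  have hvcont : Continuous fun x : H => ⟪x, v⟫ := continuous_id.inner continuous_const
  have hYmeas : ∀ k, Measurable (Y k) := fun k => hvcont.measurable.comp (hmeas k)
  -- configuration maps and stationarity transfer
  set cfg : (Fin d → ℤ) → Ω → ((Fin d → ℤ) → H) := fun t ω k => X (k + t) ω with hcfgdef
  have hcfg_meas : ∀ t, Measurable (cfg t) := fun t =>
    measurable_pi_lambda _ (fun k => hmeas _)
  have hmap : ∀ t, Measure.map (cfg t) P = Measure.map (cfg 0) P := by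
    intro t
    have h0 : cfg 0 = fun ω (k : Fin d → ℤ) => X k ω := by
      funext ω k; simp [hcfgdef]
    rw [h0]
    exact hstat t
  have hpush : ∀ (g : ((Fin d → ℤ) → H) → ℝ), Measurable g → ∀ t,
      ∫ ω, g (cfg t ω) ∂P = ∫ ω, g (cfg 0 ω) ∂P := by
    intro g hg t
    rw [← integral_map (hcfg_meas t).aemeasurable hg.aestronglyMeasurable, hmap t,
      integral_map (hcfg_meas 0).aemeasurable hg.aestronglyMeasurable]
  have hcfg0 : ∀ t ω, cfg t ω 0 = X t ω := by intro t ω; simp [hcfgdef]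
  have hgev : Measurable fun f : (Fin d → ℤ) → H => ⟪f 0, v⟫ :=
    hvcont.measurable.comp (measurable_pi_apply 0)
  -- first moments
  have hY0mean : ∫ ω, Y 0 ω ∂P = 0 := by
    calc ∫ ω, Y 0 ω ∂P = ∫ ω, ⟪v, X 0 ω⟫ ∂P := by
          refine integral_congr_ae (Filter.Eventually.of_forall fun ω => ?_)
          exact real_inner_comm _ _
      _ = ⟪v, ∫ ω, X 0 ω ∂P⟫ := integral_inner (hmoment.integrable one_le_two) v
      _ = 0 := by rw [hmean]; exact inner_zero_right v
  have hYmean : ∀ k, ∫ ω, Y k ω ∂P = 0 := by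
    intro k
    have h1 : ∫ ω, Y k ω ∂P = ∫ ω, ⟪cfg k ω 0, v⟫ ∂P := by
      refine integral_congr_ae (Filter.Eventually.of_forall fun ω => ?_)
      simp only [hcfg0, hYdef]
    rw [h1, hpush _ hgev k]
    calc ∫ ω, ⟪cfg 0 ω 0, v⟫ ∂P = ∫ ω, Y 0 ω ∂P := by
          refine integral_congr_ae (Filter.Eventually.of_forall fun ω => ?_)
          simp only [hcfg0, hYdef]
      _ = 0 := hY0mean
  -- MemLp
  have hY02 : MemLp (Y 0) 2 P := by
    refine hmoment.of_le (hYmeas 0).aestronglyMeasurable ?_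
    refine Filter.Eventually.of_forall fun ω => ?_
    rw [Real.norm_eq_abs]
    calc |⟪X 0 ω, v⟫| ≤ ‖X 0 ω‖ * ‖v‖ := abs_real_inner_le_norm _ _
      _ = ‖X 0 ω‖ := by rw [hv, mul_one]
  have hY2 : ∀ k, MemLp (Y k) 2 P := by
    intro k
    have h0 : MemLp ((fun f : (Fin d → ℤ) → H => ⟪f 0, v⟫) ∘ (cfg 0)) 2 P := by
      have he : ((fun f : (Fin d → ℤ) → H => ⟪f 0, v⟫) ∘ (cfg 0)) = Y 0 :=
        funext fun ω => by simp only [Function.comp_apply, hcfg0, hYdef]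
      rw [he]; exact hY02
    have h1 : MemLp (fun f : (Fin d → ℤ) → H => ⟪f 0, v⟫) 2 (Measure.map (cfg 0) P) :=
      (memLp_map_measure_iff hgev.aestronglyMeasurable (hcfg_meas 0).aemeasurable).mpr h0
    have h2 : MemLp (fun f : (Fin d → ℤ) → H => ⟪f 0, v⟫) 2 (Measure.map (cfg k) P) := by
      rw [hmap k]; exact h1
    have h3 : MemLp ((fun f : (Fin d → ℤ) → H => ⟪f 0, v⟫) ∘ (cfg k)) 2 P :=
      (memLp_map_measure_iff hgev.aestronglyMeasurable (hcfg_meas k).aemeasurable).mp h2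
    have he : ((fun f : (Fin d → ℤ) → H => ⟪f 0, v⟫) ∘ (cfg k)) = Y k :=
      funext fun ω => by simp only [Function.comp_apply, hcfg0, hYdef]
    rwa [he] at h3
  -- shift invariance of second moments of box sums
  have hshift : ∀ (F : Finset (Fin d → ℤ)) (t : Fin d → ℤ),
      ∫ ω, (∑ k ∈ F, Y (k + t) ω) ^ 2 ∂P = ∫ ω, (∑ k ∈ F, Y k ω) ^ 2 ∂P := by
    intro F t
    set g : ((Fin d → ℤ) → H) → ℝ := fun f => (∑ k ∈ F, ⟪f k, v⟫) ^ 2 with hgdef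
    have hg : Measurable g := (Finset.measurable_sum F (fun k _ =>
      hvcont.measurable.comp (measurable_pi_apply k))).pow_const 2
    have h1 : ∀ ω, g (cfg t ω) = (∑ k ∈ F, Y (k + t) ω) ^ 2 := fun ω => rfl
    have h2 : ∀ ω, g (cfg 0 ω) = (∑ k ∈ F, Y k ω) ^ 2 := by
      intro ω
      simp only [hgdef, hcfgdef, add_zero, hYdef]
    calc ∫ ω, (∑ k ∈ F, Y (k + t) ω) ^ 2 ∂P = ∫ ω, g (cfg t ω) ∂P :=
          integral_congr_ae (Filter.Eventually.of_forall fun ω => (h1 ω).symm)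
      _ = ∫ ω, g (cfg 0 ω) ∂P := hpush g hg t
      _ = ∫ ω, (∑ k ∈ F, Y k ω) ^ 2 ∂P :=
          integral_congr_ae (Filter.Eventually.of_forall fun ω => h2 ω)
  -- measurability w.r.t. generated σ-fields
  have hYsig : ∀ (Q : Finset (Fin d → ℤ)), ∀ k ∈ Q, Measurable[fieldSigma X ↑Q] (Y k) := by
    intro Q k hk
    have h1 : @Measurable Ω H (MeasurableSpace.comap (X k) inferInstance) _ (X k) :=
      fun s hs => ⟨s, hs, rfl⟩
    have h2 : MeasurableSpace.comap (X k) inferInstance ≤ fieldSigma X ↑Q :=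
      le_iSup₂ (f := fun (k' : Fin d → ℤ) (_ : k' ∈ (↑Q : Set (Fin d → ℤ))) =>
        MeasurableSpace.comap (X k') inferInstance) k (Finset.mem_coe.mpr hk)
    exact Measurable.comp hvcont.measurable (h1.mono h2 le_rfl)
  -- boxes
  set box : Finset (Fin d) → Finset (Fin d → ℤ) := fun V =>
    Fintype.piFinset (fun u => if u ∈ V then Finset.Icc (1:ℤ) (L u) else {0}) with hboxdef
  have hmem_box : ∀ (W : Finset (Fin d)) (k : Fin d → ℤ), k ∈ box W ↔
      (∀ u ∈ W, k u ∈ Finset.Icc (1:ℤ) (L u)) ∧ (∀ u, u ∉ W → k u = 0) := by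
    intro W k
    rw [hboxdef]
    rw [Fintype.mem_piFinset]
    constructor
    · intro h
      constructor
      · intro u hu; have := h u; rwa [if_pos hu] at this
      · intro u hu; have := h u; rw [if_neg hu] at this; simpa using this
    · rintro ⟨h1, h2⟩ u
      by_cases hu : u ∈ W
      · rw [if_pos hu]; exact h1 u hu
      · rw [if_neg hu]; simp [h2 u hu]
  -- the key induction
  have key : ∀ V : Finset (Fin d),
      ∫ ω, (∑ k ∈ box V, Y k ω) ^ 2 ∂P
        ≤ ((j:ℝ) * K) ^ V.card * (∏ u ∈ V, (L u : ℝ)) * ∫ ω, (Y 0 ω) ^ 2 ∂P := by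
    intro V
    induction V using Finset.induction_on with
    | empty =>
      have hbe : box ∅ = {(0 : Fin d → ℤ)} := by
        ext k
        rw [hmem_box]
        simp [funext_iff]
      rw [hbe]
      simp
    | @insert a V ha ih =>
      set T : Finset ℤ := Finset.Icc (1:ℤ) ((L a : ℤ)) with hTdef
      set δ : ℤ → (Fin d → ℤ) := fun c => Pi.single a c with hδdef
      have hδa : ∀ c, δ c a = c := fun c => by simp [hδdef]
      have hδne : ∀ (c : ℤ) (u : Fin d), u ≠ a → δ c u = 0 := fun c u hu => by
        simp [hδdef, Pi.single_eq_of_ne hu]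
      set Zf : ℤ → Ω → ℝ := fun c ω => ∑ x ∈ box V, Y (x + δ c) ω with hZdef
      have hbox0 : ∀ x ∈ box V, x a = 0 := fun x hx => ((hmem_box V x).mp hx).2 a ha
      have hcoord : ∀ (c : ℤ) (x : Fin d → ℤ), x ∈ box V → (x + δ c) a = c := by
        intro c x hx
        simp [hbox0 x hx, hδa]
      have hbox_eq : box (insert a V) =
          T.biUnion (fun c => (box V).image (fun x => x + δ c)) := by
        ext k
        rw [hmem_box, Finset.mem_biUnion]
        constructor
        · rintro ⟨h1, h2⟩
          refine ⟨k a, h1 a (Finset.mem_insert_self a V),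
            Finset.mem_image.mpr ⟨Function.update k a 0, ?_, ?_⟩⟩
          · rw [hmem_box]
            constructor
            · intro u hu
              have hua : u ≠ a := fun h => ha (h ▸ hu)
              rw [Function.update_of_ne hua]
              exact h1 u (Finset.mem_insert_of_mem hu)
            · intro u hu
              by_cases hua : u = a
              · subst hua; simp
              · rw [Function.update_of_ne hua]
                exact h2 u (by simp [Finset.mem_insert, hua, hu])
          · funext u
            by_cases hua : u = a
            · subst hua
              simp [hδa]
            · simp [Function.update_of_ne hua, hδne _ u hua]
        · rintro ⟨c, hc, hk⟩
          obtain ⟨x, hx, rfl⟩ := Finset.mem_image.mp hk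
          rw [hmem_box] at hx
          obtain ⟨hx1, hx2⟩ := hx
          have hxa : x a = 0 := hx2 a ha
          constructor
          · intro u hu
            rcases Finset.mem_insert.mp hu with rfl | huV
            · rw [hTdef, Finset.mem_Icc] at hc
              simp only [Pi.add_apply, hδa, hxa, zero_add, Finset.mem_Icc]
              exact hc
            · have hua : u ≠ a := fun h => ha (h ▸ huV)
              simpa [hδne _ u hua] using hx1 u huV
          · intro u hu
            have hua : u ≠ a := fun h => hu (h ▸ Finset.mem_insert_self a V)
            have huV : u ∉ V := fun h => hu (Finset.mem_insert_of_mem h)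
            simp [hδne _ u hua, hx2 u huV]
      have hpd : (↑T : Set ℤ).PairwiseDisjoint
          (fun c => (box V).image (fun x => x + δ c)) := by
        intro c1 _ c2 _ hne
        refine Finset.disjoint_left.mpr ?_
        rintro k hk1 hk2
        obtain ⟨x, hx, rfl⟩ := Finset.mem_image.mp hk1
        obtain ⟨y, hy, heq⟩ := Finset.mem_image.mp hk2
        apply hne
        have e1 : (x + δ c1) a = c1 := hcoord c1 x hx
        have e2 : (y + δ c2) a = c2 := hcoord c2 y hy
        rw [← e1, ← heq, e2]
      have hsum_eq : ∀ ω, ∑ k ∈ box (insert a V), Y k ω = ∑ c ∈ T, Zf c ω := by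
        intro ω
        rw [hbox_eq, Finset.sum_biUnion hpd]
        refine Finset.sum_congr rfl fun c _ => ?_
        rw [Finset.sum_image (fun x _ y _ h => add_right_cancel h)]
      have hZ2 : ∀ c, MemLp (Zf c) 2 P := fun c =>
        memLp_finset_sum (box V) (fun x _ => hY2 _)
      have hZmean : ∀ c, ∫ ω, Zf c ω ∂P = 0 := by
        intro c
        rw [integral_finset_sum _ (fun x _ => (hY2 _).integrable one_le_two)]
        exact Finset.sum_eq_zero fun x _ => hYmean _
      have hZsq : ∀ c, ∫ ω, (Zf c ω) ^ 2 ∂P = ∫ ω, (∑ x ∈ box V, Y x ω) ^ 2 ∂P :=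
        fun c => hshift (box V) (δ c)
      set z : ℤ → Lp ℝ 2 P := fun c => (hZ2 c).toLp (Zf c) with hzdef
      have hnorm : ∀ s : Finset ℤ, ‖∑ c ∈ s, z c‖ ^ 2 = ∫ ω, (∑ c ∈ s, Zf c ω) ^ 2 ∂P :=
        fun s => norm_sq_sum_toLp s Zf hZ2
      have hinner : ∀ s t : Finset ℤ, ⟪(∑ c ∈ s, z c), (∑ c ∈ t, z c)⟫ =
          ∫ ω, (∑ c ∈ s, Zf c ω) * (∑ c ∈ t, Zf c ω) ∂P :=
        fun s t => inner_sum_toLp s t Zf hZ2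
      set qV := ∫ ω, (∑ x ∈ box V, Y x ω) ^ 2 ∂P with hqVdef
      have hqV0 : 0 ≤ qV := integral_nonneg fun ω => sq_nonneg _
      have hzc : ∀ c, ‖z c‖ ^ 2 = qV := by
        intro c
        rw [hzdef]
        rw [norm_sq_toLp (Zf c) (hZ2 c)]
        exact hZsq c
      -- residues
      set res : ℤ → ℕ := fun c => (c % (j:ℤ)).toNat with hresdef
      have hj' : (0:ℤ) < (j:ℤ) := by exact_mod_cast hj
      have hres : ∀ c ∈ T, res c ∈ Finset.range j := by
        intro c _
        have h1 : 0 ≤ c % (j:ℤ) := Int.emod_nonneg c hj'.ne'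
        have h2 : c % (j:ℤ) < j := Int.emod_lt_of_pos c hj'
        rw [Finset.mem_range]
        simp only [hresdef]
        omega
      have hfib : ∀ c1 ∈ T, ∀ c2 ∈ T, res c1 = res c2 → c1 ≠ c2 → (j:ℤ) ≤ |c1 - c2| := by
        intro c1 _ c2 _ hr hne
        have h1 : 0 ≤ c1 % (j:ℤ) := Int.emod_nonneg c1 hj'.ne'
        have h2 : 0 ≤ c2 % (j:ℤ) := Int.emod_nonneg c2 hj'.ne'
        have hmod : c1 % (j:ℤ) = c2 % (j:ℤ) := by
          rw [hresdef] at hr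
          simp only at hr
          omega
        have hdvd : (j:ℤ) ∣ c1 - c2 := Int.ModEq.dvd (Int.ModEq.symm hmod)
        have habs : (j:ℤ) ∣ |c1 - c2| := (dvd_abs _ _).mpr hdvd
        exact Int.le_of_dvd (abs_pos.mpr (sub_ne_zero.mpr hne)) habs
      have hsplit : (∑ c ∈ T, z c) =
          ∑ r ∈ Finset.range j, ∑ c ∈ T.filter (fun c => res c = r), z c :=
        (Finset.sum_fiberwise_of_maps_to hres z).symm
      have hcardT : ∑ r ∈ Finset.range j, (T.filter (fun c => res c = r)).card = T.card :=
        (Finset.card_eq_sum_card_fiberwise hres).symm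
      -- per-residue core bound
      have hWbound : ∀ r ∈ Finset.range j,
          ‖∑ c ∈ T.filter (fun c => res c = r), z c‖ ^ 2
            ≤ K * (((T.filter (fun c => res c = r)).card : ℝ) * qV) := by
        intro r _
        set Tr := T.filter (fun c => res c = r) with hTrdef
        have hcore : (1 - ρ) * ‖∑ c ∈ Tr, z c‖ ^ 2 ≤ (1 + ρ) * ∑ c ∈ Tr, ‖z c‖ ^ 2 := by
          refine core_sum_sq ρ hρ0 Tr z ?_
          intro A hA
          by_cases hboxne : (box V).Nonempty
          case neg =>
            have hZf0 : ∀ c ω, Zf c ω = 0 := by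
              intro c ω
              show ∑ x ∈ box V, Y (x + δ c) ω = 0
              rw [Finset.not_nonempty_iff_eq_empty.mp hboxne, Finset.sum_empty]
            have hsq0 : ‖∑ c ∈ A, z c‖ ^ 2 = 0 := by
              rw [hnorm A]
              have hz0 : ∀ ω, (∑ c ∈ A, Zf c ω) ^ 2 = (0:ℝ) := by
                intro ω
                rw [Finset.sum_eq_zero (fun c _ => hZf0 c ω)]
                ring
              calc ∫ ω, (∑ c ∈ A, Zf c ω) ^ 2 ∂P = ∫ _, (0:ℝ) ∂P :=
                    integral_congr_ae (Filter.Eventually.of_forall hz0)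
                _ = 0 := integral_zero _ _
            have hu0 : ‖∑ c ∈ A, z c‖ = 0 := (pow_eq_zero_iff two_ne_zero).mp hsq0
            have hcs := abs_real_inner_le_norm (∑ c ∈ A, z c) (∑ c ∈ Tr \ A, z c)
            rw [hu0] at hcs ⊢
            simpa using hcs
          case pos =>
          by_cases hAe : A.Nonempty
          case neg =>
            rw [Finset.not_nonempty_iff_eq_empty.mp hAe, Finset.sum_empty]
            simp
          case pos =>
          by_cases hBe : (Tr \ A).Nonempty
          case neg =>
            rw [Finset.not_nonempty_iff_eq_empty.mp hBe, Finset.sum_empty]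
            simp
          case pos =>
          -- main mixing case
          set QA := A.biUnion (fun c => (box V).image (fun x => x + δ c)) with hQAdef
          set QB := (Tr \ A).biUnion (fun c => (box V).image (fun x => x + δ c))
            with hQBdef
          have hQAcoord : ∀ k ∈ QA, k a ∈ A := by
            intro k hk
            obtain ⟨c, hc, hk2⟩ := Finset.mem_biUnion.mp hk
            obtain ⟨x, hx, rfl⟩ := Finset.mem_image.mp hk2
            rw [hcoord c x hx]; exact hc
          have hQBcoord : ∀ k ∈ QB, k a ∈ Tr \ A := by
            intro k hk
            obtain ⟨c, hc, hk2⟩ := Finset.mem_biUnion.mp hk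
            obtain ⟨x, hx, rfl⟩ := Finset.mem_image.mp hk2
            rw [hcoord c x hx]; exact hc
          have hQAne : QA.Nonempty := by
            obtain ⟨c, hc⟩ := hAe
            obtain ⟨x, hx⟩ := hboxne
            exact ⟨x + δ c, Finset.mem_biUnion.mpr
              ⟨c, hc, Finset.mem_image.mpr ⟨x, hx, rfl⟩⟩⟩
          have hQBne : QB.Nonempty := by
            obtain ⟨c, hc⟩ := hBe
            obtain ⟨x, hx⟩ := hboxne
            exact ⟨x + δ c, Finset.mem_biUnion.mpr
              ⟨c, hc, Finset.mem_image.mpr ⟨x, hx, rfl⟩⟩⟩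
          have hQdisj : Disjoint QA QB := by
            refine Finset.disjoint_left.mpr fun k hk1 hk2 => ?_
            exact (Finset.mem_sdiff.mp (hQBcoord k hk2)).2 (hQAcoord k hk1)
          have hsubA : A ⊆ T := fun c hc => Finset.filter_subset _ _ (hA hc)
          have hsubB : Tr \ A ⊆ T := fun c hc =>
            Finset.filter_subset _ _ (Finset.sdiff_subset hc)
          have hresA : ∀ c ∈ A, res c = r := fun c hc => (Finset.mem_filter.mp (hA hc)).2
          have hresB : ∀ c ∈ Tr \ A, res c = r := fun c hc =>
            (Finset.mem_filter.mp (Finset.sdiff_subset hc)).2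
          have hsep : SeparatedPair j QA QB := by
            refine ⟨a, ↑A, ↑(Tr \ A), Finset.coe_nonempty.mpr hAe,
              Finset.coe_nonempty.mpr hBe, ?_, ?_, ?_, ?_⟩
            · exact Finset.disjoint_coe.mpr Finset.disjoint_sdiff
            · intro c1 hc1 c2 hc2
              have hc1' : c1 ∈ A := hc1
              have hc2' : c2 ∈ Tr \ A := hc2
              refine hfib c1 (hsubA hc1') c2 (hsubB hc2') ?_ ?_
              · rw [hresA c1 hc1', hresB c2 hc2']
              · rintro rfl
                exact (Finset.mem_sdiff.mp hc2').2 hc1'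
            · exact fun k hk => hQAcoord k hk
            · exact fun k hk => hQBcoord k hk
          have hfm : Measurable[fieldSigma X ↑QA] (fun ω => ∑ c ∈ A, Zf c ω) := by
            refine Finset.measurable_sum A fun c hc => ?_
            refine Finset.measurable_sum (box V) fun x hx => ?_
            exact hYsig QA _ (Finset.mem_biUnion.mpr
              ⟨c, hc, Finset.mem_image.mpr ⟨x, hx, rfl⟩⟩)
          have hgm : Measurable[fieldSigma X ↑QB] (fun ω => ∑ c ∈ Tr \ A, Zf c ω) := by
            refine Finset.measurable_sum _ fun c hc => ?_
            refine Finset.measurable_sum (box V) fun x hx => ?_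
            exact hYsig QB _ (Finset.mem_biUnion.mpr
              ⟨c, hc, Finset.mem_image.mpr ⟨x, hx, rfl⟩⟩)
          have hf2 : MemLp (fun ω => ∑ c ∈ A, Zf c ω) 2 P :=
            memLp_finset_sum A (fun c _ => hZ2 c)
          have hg2 : MemLp (fun ω => ∑ c ∈ Tr \ A, Zf c ω) 2 P :=
            memLp_finset_sum _ (fun c _ => hZ2 c)
          have hfmean : ∫ ω, (∑ c ∈ A, Zf c ω) ∂P = 0 := by
            rw [integral_finset_sum _ (fun c _ => (hZ2 c).integrable one_le_two)]
            exact Finset.sum_eq_zero fun c _ => hZmean c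
          have hgmean : ∫ ω, (∑ c ∈ Tr \ A, Zf c ω) ∂P = 0 := by
            rw [integral_finset_sum _ (fun c _ => (hZ2 c).integrable one_le_two)]
            exact Finset.sum_eq_zero fun c _ => hZmean c
          have lemA := cov_le_rhoPrime X j QA QB hQAne hQBne hQdisj hsep
            (fun ω => ∑ c ∈ A, Zf c ω) (fun ω => ∑ c ∈ Tr \ A, Zf c ω) hfm hgm hf2 hg2
          rw [hfmean, hgmean, mul_zero, sub_zero] at lemA
          rw [hinner A (Tr \ A)]
          have hvf : Real.sqrt (variance (fun ω => ∑ c ∈ A, Zf c ω) P)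
              = ‖∑ c ∈ A, z c‖ := by
            rw [variance_of_integral_zero _ hf2 hfmean, ← hnorm A,
              Real.sqrt_sq (norm_nonneg _)]
          have hvg : Real.sqrt (variance (fun ω => ∑ c ∈ Tr \ A, Zf c ω) P)
              = ‖∑ c ∈ Tr \ A, z c‖ := by
            rw [variance_of_integral_zero _ hg2 hgmean, ← hnorm (Tr \ A),
              Real.sqrt_sq (norm_nonneg _)]
          rw [hvf, hvg] at lemA
          exact lemA
        -- conclude the per-residue bound
        have hsumz : (∑ c ∈ Tr, ‖z c‖ ^ 2) = (Tr.card : ℝ) * qV := by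
          rw [Finset.sum_congr rfl (fun c _ => hzc c), Finset.sum_const, nsmul_eq_mul]
        rw [hsumz] at hcore
        rw [hKdef, div_mul_eq_mul_div, le_div_iff₀ h1ρ]
        calc ‖∑ c ∈ Tr, z c‖ ^ 2 * (1 - ρ) = (1 - ρ) * ‖∑ c ∈ Tr, z c‖ ^ 2 := by ring
          _ ≤ (1 + ρ) * ((Tr.card : ℝ) * qV) := hcore
      -- assemble the induction step
      have hTcard : T.card = L a := by
        rw [hTdef, Int.card_Icc]
        omega
      have hq_eq : ∫ ω, (∑ k ∈ box (insert a V), Y k ω) ^ 2 ∂P = ‖∑ c ∈ T, z c‖ ^ 2 := by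
        rw [hnorm T]
        refine integral_congr_ae (Filter.Eventually.of_forall fun ω => ?_)
        show (∑ k ∈ box (insert a V), Y k ω) ^ 2 = (∑ c ∈ T, Zf c ω) ^ 2
        rw [hsum_eq ω]
      have step1 : ∫ ω, (∑ k ∈ box (insert a V), Y k ω) ^ 2 ∂P
          ≤ (j : ℝ) * K * ((L a : ℝ) * qV) := by
        rw [hq_eq, hsplit]
        calc ‖∑ r ∈ Finset.range j, ∑ c ∈ T.filter (fun c => res c = r), z c‖ ^ 2
            ≤ (∑ r ∈ Finset.range j, ‖∑ c ∈ T.filter (fun c => res c = r), z c‖) ^ 2 := by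
              refine pow_le_pow_left₀ (norm_nonneg _) (norm_sum_le _ _) 2
          _ ≤ ((Finset.range j).card : ℝ) *
              ∑ r ∈ Finset.range j, ‖∑ c ∈ T.filter (fun c => res c = r), z c‖ ^ 2 :=
              sq_sum_le_card_mul_sum_sq
          _ ≤ (j : ℝ) * ∑ r ∈ Finset.range j,
              (K * (((T.filter (fun c => res c = r)).card : ℝ) * qV)) := by
              rw [Finset.card_range]
              exact mul_le_mul_of_nonneg_left (Finset.sum_le_sum hWbound)
                (by positivity)
          _ = (j : ℝ) * (K * ((T.card : ℝ) * qV)) := by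
              congr 1
              calc ∑ r ∈ Finset.range j,
                    (K * (((T.filter (fun c => res c = r)).card : ℝ) * qV))
                  = K * ((∑ r ∈ Finset.range j,
                      ((T.filter (fun c => res c = r)).card : ℝ)) * qV) := by
                    rw [Finset.sum_mul, Finset.mul_sum]
                _ = K * ((T.card : ℝ) * qV) := by
                    rw [← Nat.cast_sum, hcardT]
          _ = (j : ℝ) * K * ((L a : ℝ) * qV) := by
              rw [hTcard]; ring
      calc ∫ ω, (∑ k ∈ box (insert a V), Y k ω) ^ 2 ∂P
          ≤ (j : ℝ) * K * ((L a : ℝ) * qV) := step1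
        _ ≤ (j : ℝ) * K * ((L a : ℝ) *
            (((j:ℝ) * K) ^ V.card * (∏ u ∈ V, (L u : ℝ)) * ∫ ω, (Y 0 ω) ^ 2 ∂P)) := by
            refine mul_le_mul_of_nonneg_left (mul_le_mul_of_nonneg_left ih (by positivity))
              (by positivity)
        _ = ((j:ℝ) * K) ^ (insert a V).card * (∏ u ∈ insert a V, (L u : ℝ)) *
            ∫ ω, (Y 0 ω) ^ 2 ∂P := by
            rw [Finset.card_insert_of_notMem ha, Finset.prod_insert ha, pow_succ]
            ring
  -- specialize to V = univ and translate to boxSum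
  have huniv := key Finset.univ
  have hbs : ∀ ω, ⟪boxSum X L ω, v⟫ = ∑ k ∈ box Finset.univ, Y k ω := by
    intro ω
    rw [boxSum, sum_inner]
    refine Finset.sum_nbij' (fun k => (fun u => ((k u : ℤ))))
      (fun x => (fun u => (x u).toNat)) ?_ ?_ ?_ ?_ ?_
    · intro k hk
      rw [Finset.mem_Icc] at hk
      rw [hmem_box]
      constructor
      · intro u _
        have h1 : (1:ℕ) ≤ k u := hk.1 u
        have h2 : k u ≤ L u := hk.2 u
        show ((k u : ℕ) : ℤ) ∈ Finset.Icc (1:ℤ) ((L u : ℤ))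
        rw [Finset.mem_Icc]
        omega
      · intro u hu
        exact absurd (Finset.mem_univ u) hu
    · intro x hx
      rw [hmem_box] at hx
      rw [Finset.mem_Icc]
      constructor
      · intro u
        have h3 := hx.1 u (Finset.mem_univ u)
        rw [Finset.mem_Icc] at h3
        show (1:ℕ) ≤ (x u).toNat
        omega
      · intro u
        have h3 := hx.1 u (Finset.mem_univ u)
        rw [Finset.mem_Icc] at h3
        show (x u).toNat ≤ L u
        omega
    · intro k hk
      funext u
      show ((k u : ℤ)).toNat = k u
      omega
    · intro x hx
      rw [hmem_box] at hx
      funext u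
      have h3 := hx.1 u (Finset.mem_univ u)
      rw [Finset.mem_Icc] at h3
      show (((x u).toNat : ℕ) : ℤ) = x u
      omega
    · intro k hk
      rfl
  have heq1 : ∫ ω, ⟪boxSum X L ω, v⟫ ^ 2 ∂P
      = ∫ ω, (∑ k ∈ box Finset.univ, Y k ω) ^ 2 ∂P := by
    refine integral_congr_ae (Filter.Eventually.of_forall fun ω => ?_)
    show ⟪boxSum X L ω, v⟫ ^ 2 = (∑ k ∈ box Finset.univ, Y k ω) ^ 2
    rw [hbs ω]
  rw [heq1]
  have hcard : (Finset.univ : Finset (Fin d)).card = d := by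
    rw [Finset.card_univ, Fintype.card_fin]
  rw [hcard] at huniv
  calc ∫ ω, (∑ k ∈ box Finset.univ, Y k ω) ^ 2 ∂P
      ≤ ((j:ℝ) * K) ^ d * (∏ u ∈ Finset.univ, (L u : ℝ)) * ∫ ω, (Y 0 ω) ^ 2 ∂P := huniv
    _ = ((j:ℝ) * ((1 + ρ) / (1 - ρ))) ^ d * (∏ u, (L u : ℝ)) * ∫ ω, ⟪X 0 ω, v⟫ ^ 2 ∂P := by
        rw [hKdef]

end Main

end CovTraceAux

open scoped RealInnerProductSpace in
/-- Finite trace of the covariance operator: with `j` such that `ρ'(X,j) < 1`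
and `C = j^d (1+ρ'(X,j))^d / (1-ρ'(X,j))^d`, one has
`σ_{ii} ≤ C E⟪X₀, e_i⟫²` for every `i`, hence
`∑_i σ_{ii} ≤ C E‖X₀‖² < ∞`. -/
theorem covariance_operator_finite_trace
    {Ω : Type*} [MeasurableSpace Ω] (P : Measure Ω) [IsProbabilityMeasure P]
    {H : Type*} [NormedAddCommGroup H] [InnerProductSpace ℝ H] [CompleteSpace H]
    [TopologicalSpace.SeparableSpace H] [MeasurableSpace H] [BorelSpace H]
    (e : ℕ → H) (he : Orthonormal ℝ e)
    (htotal : ⊤ ≤ (Submodule.span ℝ (Set.range e)).topologicalClosure)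
    (d : ℕ) (hd : 0 < d) (X : (Fin d → ℤ) → Ω → H)
    (hmeas : ∀ k, Measurable (X k))
    (hstat : StrictlyStationary P X)
    (hmix : RhoPrimeMixing P X)
    (hmoment : MemLp (X 0) 2 P)
    (hmean : ∫ ω, X 0 ω ∂P = 0)
    (j : ℕ) (hj : 0 < j) (hρ : rhoPrime P X j < 1)
    (C : ℝ)
    (hC : C = (j : ℝ) ^ d * (1 + rhoPrime P X j) ^ d / (1 - rhoPrime P X j) ^ d)
    (σdiag : ℕ → ℝ)
    (hσ : ∀ i, Tendsto (fun L : Fin d → ℕ =>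
        (∫ ω, ⟪boxSum X L ω, e i⟫ ^ 2 ∂P) / ∏ u, (L u : ℝ))
        atTop (nhds (σdiag i))) :
    (∀ i, σdiag i ≤ C * ∫ ω, ⟪X 0 ω, e i⟫ ^ 2 ∂P) ∧
      Summable σdiag ∧
      ∑' i, σdiag i ≤ C * ∫ ω, ‖X 0 ω‖ ^ 2 ∂P := by
  classical
  have hρ0 : 0 ≤ rhoPrime P X j := CovTraceAux.rhoPrime_nonneg X j
  have h1ρ : 0 < 1 - rhoPrime P X j := by linarith
  have hCval : C = ((j:ℝ) * ((1 + rhoPrime P X j) / (1 - rhoPrime P X j))) ^ d := by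
    rw [hC, mul_pow, div_pow]
    ring
  have hC0 : 0 ≤ C := by
    rw [hCval]
    positivity
  have hY2 : ∀ i : ℕ, MemLp (fun ω => ⟪X 0 ω, e i⟫) 2 P := by
    intro i
    have hcont : Continuous fun x : H => ⟪x, e i⟫ := continuous_id.inner continuous_const
    refine hmoment.of_le (hcont.measurable.comp (hmeas 0)).aestronglyMeasurable ?_
    refine Filter.Eventually.of_forall fun ω => ?_
    rw [Real.norm_eq_abs]
    calc |⟪X 0 ω, e i⟫| ≤ ‖X 0 ω‖ * ‖e i‖ := abs_real_inner_le_norm _ _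
      _ = ‖X 0 ω‖ := by rw [he.1 i, mul_one]
  have hbound : ∀ i, σdiag i ≤ C * ∫ ω, ⟪X 0 ω, e i⟫ ^ 2 ∂P := by
    intro i
    refine le_of_tendsto (hσ i) (Filter.Eventually.of_forall fun L => ?_)
    by_cases hL : (∏ u, (L u : ℝ)) = 0
    · rw [hL, div_zero]
      exact mul_nonneg hC0 (integral_nonneg fun ω => sq_nonneg _)
    · have hLpos : 0 < ∏ u, (L u : ℝ) := lt_of_le_of_ne (by positivity) (Ne.symm hL)
      rw [div_le_iff₀ hLpos]
      calc ∫ ω, ⟪boxSum X L ω, e i⟫ ^ 2 ∂P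
          ≤ ((j:ℝ) * ((1 + rhoPrime P X j) / (1 - rhoPrime P X j))) ^ d
            * (∏ u, (L u : ℝ)) * ∫ ω, ⟪X 0 ω, e i⟫ ^ 2 ∂P :=
            CovTraceAux.main_box_bound X hmeas hstat hmoment hmean (e i) (he.1 i) j hj hρ L
        _ = C * (∫ ω, ⟪X 0 ω, e i⟫ ^ 2 ∂P) * ∏ u, (L u : ℝ) := by
            rw [hCval]; ring
  have hσ0 : ∀ i, 0 ≤ σdiag i := by
    intro i
    refine ge_of_tendsto (hσ i) (Filter.Eventually.of_forall fun L => ?_)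
    exact div_nonneg (integral_nonneg fun ω => sq_nonneg _) (by positivity)
  have hXnorm2 : Integrable (fun ω => ‖X 0 ω‖ ^ 2) P :=
    (memLp_two_iff_integrable_sq_norm hmoment.aestronglyMeasurable).mp hmoment
  have hpartial : ∀ n : ℕ, ∑ i ∈ Finset.range n, σdiag i ≤ C * ∫ ω, ‖X 0 ω‖ ^ 2 ∂P := by
    intro n
    calc ∑ i ∈ Finset.range n, σdiag i
        ≤ ∑ i ∈ Finset.range n, C * ∫ ω, ⟪X 0 ω, e i⟫ ^ 2 ∂P :=
          Finset.sum_le_sum fun i _ => hbound i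
      _ = C * ∫ ω, ∑ i ∈ Finset.range n, ⟪X 0 ω, e i⟫ ^ 2 ∂P := by
          rw [← Finset.mul_sum, ← integral_finset_sum _ (fun i _ => (hY2 i).integrable_sq)]
      _ ≤ C * ∫ ω, ‖X 0 ω‖ ^ 2 ∂P := by
          refine mul_le_mul_of_nonneg_left ?_ hC0
          refine integral_mono (integrable_finset_sum _ (fun i _ => (hY2 i).integrable_sq))
            hXnorm2 ?_
          intro ω
          calc ∑ i ∈ Finset.range n, ⟪X 0 ω, e i⟫ ^ 2
              = ∑ i ∈ Finset.range n, ‖⟪e i, X 0 ω⟫‖ ^ 2 :=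
                Finset.sum_congr rfl fun i _ => by
                  rw [Real.norm_eq_abs, sq_abs, real_inner_comm]
            _ ≤ ‖X 0 ω‖ ^ 2 := he.sum_inner_products_le _
  exact ⟨hbound, summable_of_sum_range_le hσ0 hpartial,
    Summable.tsum_le_of_sum_range_le (summable_of_sum_range_le hσ0 hpartial) hpartial⟩


end
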